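/- Let u : ℝⁿ → ℝⁿ be a C¹ vector field and a₀ a continuous symbol assigning to each x ∈ ℝⁿ and ξ ∈ ℝⁿ∖{0} an n×n complex matrix. Assume that for all x ∈ ℝⁿ, ξ ∈ ℝⁿ∖{0}, and b ∈ ℂⁿ with b·ξ = 0, one has (a₀(x,ξ) b)·ξ = (Du(x) b)·ξ. Then the bicharacteristic-amplitude system preserves the incompressibility constraint: for every solution (x, ξ, b) of the BAS with ξ(t) ≠ 0 for all t and b(0)·ξ(0) = 0, one has b(t)·ξ(t) = 0 for all t. -/

import Mathlib

/-- The Jacobian matrix `Du(x)` of a vector field `u : ℝⁿ → ℝⁿ`. -/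
noncomputable def jacobian {n : ℕ} (u : (Fin n → ℝ) → (Fin n → ℝ)) (x : Fin n → ℝ) :
    Matrix (Fin n) (Fin n) ℝ :=
  Matrix.of fun i j => fderiv ℝ u x (Pi.single j 1) i

private lemma transpose_pair {n : ℕ} (M : Matrix (Fin n) (Fin n) ℝ) (v : Fin n → ℝ)
    (c : Fin n → ℂ) :
    ∑ i, c i * ((M.transpose.mulVec v) i : ℂ)
      = ∑ j, ((M.map Complex.ofReal).mulVec c) j * (v j : ℂ) := by
  simp only [Matrix.mulVec, dotProduct, Matrix.transpose_apply, Matrix.map_apply,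
    Finset.sum_mul]
  push_cast
  rw [Finset.sum_comm]
  exact Finset.sum_congr rfl fun i _ => by
    rw [Finset.mul_sum]; exact Finset.sum_congr rfl fun j _ => by ring

/-- If the symbol `a₀` satisfies `(a₀(x,ξ) b)·ξ = (Du(x) b)·ξ` for all
`b` with `b·ξ = 0`, then the bicharacteristic-amplitude system preserves the
incompressibility constraint `b(t)·ξ(t) = 0`. -/
theorem stmt_10 {n : ℕ}
    (u : (Fin n → ℝ) → (Fin n → ℝ)) (hu : ContDiff ℝ 1 u)
    (a₀ : (Fin n → ℝ) → (Fin n → ℝ) → Matrix (Fin n) (Fin n) ℂ)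
    (ha₀ : ContinuousOn (fun p : (Fin n → ℝ) × (Fin n → ℝ) => a₀ p.1 p.2)
      {p | p.2 ≠ 0})
    (hrel : ∀ (y ξ : Fin n → ℝ), ξ ≠ 0 → ∀ b : Fin n → ℂ,
      (∑ i, b i * (ξ i : ℂ)) = 0 →
      (∑ i, ((a₀ y ξ).mulVec b) i * (ξ i : ℂ))
        = ∑ i, (((jacobian u y).map Complex.ofReal).mulVec b) i * (ξ i : ℂ))
    (x : ℝ → Fin n → ℝ) (ξ : ℝ → Fin n → ℝ) (b : ℝ → Fin n → ℂ)
    (hξne : ∀ t, ξ t ≠ 0)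
    (hx : ∀ t, HasDerivAt x (u (x t)) t)
    (hξ : ∀ t, HasDerivAt ξ (-((jacobian u (x t)).transpose.mulVec (ξ t))) t)
    (hb : ∀ t, HasDerivAt b ((a₀ (x t) (ξ t)).mulVec (b t)) t)
    (hb0 : (∑ i, b 0 i * (ξ 0 i : ℂ)) = 0) :
    ∀ t : ℝ, (∑ i, b t i * (ξ t i : ℂ)) = 0 := by
  classical
  set ξℂ : ℝ → Fin n → ℂ := fun t i => (ξ t i : ℂ) with hξℂdef
  set f : ℝ → ℂ := fun t => ∑ i, b t i * (ξ t i : ℂ) with hfdef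
  set q : ℝ → ℂ := fun t => ∑ i, (ξ t i : ℂ) ^ 2 with hqdef
  have hq : ∀ t, q t ≠ 0 := by
    intro t
    have h1 : (0 : ℝ) < ∑ i, (ξ t i) ^ 2 := by
      rcases Function.ne_iff.mp (hξne t) with ⟨j, hj⟩
      have hj' : ξ t j ≠ 0 := by simpa using hj
      exact Finset.sum_pos' (fun i _ => sq_nonneg _)
        ⟨j, Finset.mem_univ _, by positivity⟩
    have h2 : ((∑ i, (ξ t i) ^ 2 : ℝ) : ℂ) ≠ 0 := by exact_mod_cast h1.ne'
    simpa [hqdef] using h2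
  set k : ℝ → ℂ := fun t =>
    ((∑ i, ((a₀ (x t) (ξ t)).mulVec (ξℂ t)) i * (ξ t i : ℂ))
      - ∑ i, (((jacobian u (x t)).map Complex.ofReal).mulVec (ξℂ t)) i * (ξ t i : ℂ))
      / q t with hkdef
  -- the key derivative identity
  have hf' : ∀ t, HasDerivAt f (k t * f t) t := by
    intro t
    have hbi := hasDerivAt_pi.mp (hb t)
    have hξi := hasDerivAt_pi.mp (hξ t)
    have hG : HasDerivAt f (∑ i, (((a₀ (x t) (ξ t)).mulVec (b t)) i * (ξ t i : ℂ)
        + b t i * ((-((jacobian u (x t)).transpose.mulVec (ξ t))) i : ℝ))) t := by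
      apply HasDerivAt.fun_sum
      intro i _
      exact (hbi i).mul ((hξi i).ofReal_comp)
    convert hG using 1
    -- now the algebraic identity
    rw [Finset.sum_add_distrib]
    have hswap : ∑ i, b t i * ((-((jacobian u (x t)).transpose.mulVec (ξ t))) i : ℝ)
        = -∑ j, (((jacobian u (x t)).map Complex.ofReal).mulVec (b t)) j * (ξ t j : ℂ) := by
      have h1 : ∑ i, b t i * ((-((jacobian u (x t)).transpose.mulVec (ξ t))) i : ℝ)
          = -∑ i, b t i * ((((jacobian u (x t)).transpose.mulVec (ξ t))) i : ℂ) := by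
        rw [← Finset.sum_neg_distrib]
        exact Finset.sum_congr rfl fun i _ => by push_cast [Pi.neg_apply]; ring
      rw [h1, transpose_pair]
    rw [hswap]
    -- use hrel on b₀ := b t - (f t / q t) • ξℂ t
    set r : ℂ := f t / q t with hrdef
    set b₀ : Fin n → ℂ := b t - r • ξℂ t with hb₀def
    have hb₀ξ : (∑ i, b₀ i * (ξ t i : ℂ)) = 0 := by
      have h2 : ∑ i, b₀ i * (ξ t i : ℂ) = f t - r * q t := by
        rw [hb₀def]
        simp only [Pi.sub_apply, Pi.smul_apply, smul_eq_mul]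
        calc ∑ i, (b t i - r * ξℂ t i) * (ξ t i : ℂ)
            = ∑ i, (b t i * (ξ t i : ℂ) - r * (ξℂ t i * (ξ t i : ℂ))) :=
              Finset.sum_congr rfl fun i _ => by ring
          _ = f t - r * q t := by
              rw [Finset.sum_sub_distrib, ← Finset.mul_sum]
              congr 2
              exact Finset.sum_congr rfl fun i _ => (sq ((ξ t i : ℂ))).symm
      rw [h2, hrdef, div_mul_cancel₀ _ (hq t), sub_self]
    have hr := hrel (x t) (ξ t) (hξne t) b₀ hb₀ξ
    have expand : ∀ M : Matrix (Fin n) (Fin n) ℂ,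
        ∑ i, (M.mulVec b₀) i * (ξ t i : ℂ)
          = (∑ i, (M.mulVec (b t)) i * (ξ t i : ℂ))
            - r * ∑ i, (M.mulVec (ξℂ t)) i * (ξ t i : ℂ) := by
      intro M
      rw [hb₀def, Matrix.mulVec_sub, Matrix.mulVec_smul]
      simp only [Pi.sub_apply, Pi.smul_apply, smul_eq_mul]
      rw [Finset.mul_sum, ← Finset.sum_sub_distrib]
      exact Finset.sum_congr rfl fun i _ => by ring
    rw [expand, expand] at hr
    have hk : k t * f t = r * ((∑ i, ((a₀ (x t) (ξ t)).mulVec (ξℂ t)) i * (ξ t i : ℂ))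
        - ∑ i, (((jacobian u (x t)).map Complex.ofReal).mulVec (ξℂ t)) i * (ξ t i : ℂ)) := by
      rw [hkdef, hrdef]
      field_simp
    rw [hk]
    linear_combination -hr
  -- continuity of k
  have hxc : Continuous x := continuous_iff_continuousAt.mpr fun t => (hx t).continuousAt
  have hξc : Continuous ξ := continuous_iff_continuousAt.mpr fun t => (hξ t).continuousAt
  have hξic : ∀ i, Continuous fun t => (ξ t i : ℂ) :=
    fun i => Complex.continuous_ofReal.comp ((continuous_apply i).comp hξc)
  have hAc : Continuous fun t => a₀ (x t) (ξ t) :=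
    ha₀.comp_continuous (hxc.prodMk hξc) fun t => hξne t
  have hAij : ∀ i j, Continuous fun t => a₀ (x t) (ξ t) i j :=
    fun i j => (continuous_apply j).comp ((continuous_apply i).comp hAc)
  have hJij : ∀ i j, Continuous fun t => ((jacobian u (x t)).map Complex.ofReal) i j := by
    intro i j
    have : Continuous fun t => jacobian u (x t) i j :=
      (continuous_apply i).comp
        (((hu.continuous_fderiv one_ne_zero).comp hxc).clm_apply continuous_const)
    exact Complex.continuous_ofReal.comp this
  have hkc : Continuous k := by
    apply Continuous.div
    · apply Continuous.sub
      · apply continuous_finset_sum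
        intro i _
        exact ((continuous_finset_sum _ fun j _ => (hAij i j).mul (hξic j))).mul (hξic i)
      · apply continuous_finset_sum
        intro i _
        exact ((continuous_finset_sum _ fun j _ => (hJij i j).mul (hξic j))).mul (hξic i)
    · exact continuous_finset_sum _ fun i _ => (hξic i).pow 2
    · exact hq
  have hfc : Continuous f := continuous_iff_continuousAt.mpr fun t => (hf' t).continuousAt
  have hf0 : f 0 = 0 := hb0
  -- Gronwall, both time directions
  intro t
  rcases le_total 0 t with ht | ht
  · obtain ⟨K, hK⟩ := (isCompact_Icc (a := 0) (b := t)).exists_bound_of_continuousOn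
      hkc.continuousOn
    have := norm_le_gronwallBound_of_norm_deriv_right_le (f := f)
      (f' := fun s => k s * f s) (δ := 0) (K := K) (ε := 0) (a := 0) (b := t)
      hfc.continuousOn
      (fun s _ => (hf' s).hasDerivWithinAt)
      (by simp [hf0])
      (fun s hs => by
        rw [norm_mul]
        have h1 : ‖k s‖ ≤ K := hK s (Set.mem_Icc.mpr ⟨hs.1, le_of_lt hs.2⟩)
        nlinarith [norm_nonneg (f s), norm_nonneg (k s)])
      t (Set.mem_Icc.mpr ⟨ht, le_rfl⟩)
    rw [gronwallBound_ε0_δ0] at this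
    have : f t = 0 := norm_le_zero_iff.mp this
    simpa [hfdef] using this
  · -- backwards in time: consider g s = f (-s)
    set g : ℝ → ℂ := fun s => f (-s) with hgdef
    have hg' : ∀ s, HasDerivAt g (-(k (-s) * f (-s))) s := by
      intro s
      have h1 : HasDerivAt (fun y : ℝ => -y) (-1) s := (hasDerivAt_id s).neg
      have h2 := (hf' (-s)).scomp s h1
      have h3 : ((-1 : ℝ) • (k (-s) * f (-s))) = -(k (-s) * f (-s)) := by
        simp
      rw [h3] at h2
      exact h2
    obtain ⟨K, hK⟩ := (isCompact_Icc (a := t) (b := 0)).exists_bound_of_continuousOn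
      hkc.continuousOn
    have hgc : Continuous g := hfc.comp continuous_neg
    have := norm_le_gronwallBound_of_norm_deriv_right_le (f := g)
      (f' := fun s => -(k (-s) * f (-s))) (δ := 0) (K := K) (ε := 0) (a := 0) (b := -t)
      hgc.continuousOn
      (fun s _ => (hg' s).hasDerivWithinAt)
      (by simp [hgdef, hf0])
      (fun s hs => by
        rw [norm_neg, norm_mul]
        have hmem : -s ∈ Set.Icc t 0 := by
          constructor <;> [linarith [hs.2]; linarith [hs.1]]
        have h1 : ‖k (-s)‖ ≤ K := hK _ hmem
        have h2 : ‖f (-s)‖ = ‖g s‖ := by simp [hgdef]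
        rw [h2]
        nlinarith [norm_nonneg (g s), norm_nonneg (k (-s))])
      (-t) (Set.mem_Icc.mpr ⟨by linarith, le_rfl⟩)
    rw [gronwallBound_ε0_δ0] at this
    have h0 : g (-t) = 0 := norm_le_zero_iff.mp this
    have : f t = 0 := by simpa [hgdef] using h0
    simpa [hfdef] using this
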